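/- Let (a_n)_{n≥0} be a nonincreasing sequence of positive reals, (γ_n) a sequence in ℝ^K, and Γ_n = Σ_{i=1}^n γ_i. Then for all n ≥ 1 and all j ≥ n, ‖Σ_{k=n}^j a_k γ_k‖₁ ≤ ‖a_j Γ_j‖₁ + ‖a_{n−1} Γ_{n−1}‖₁ + (sup_{k≥n−1} ‖a_k Γ_k‖₁)·(a_n/a_j). -/

import Mathlib

open Filter
open scoped ENNReal

noncomputable section

/-- The `ℓ¹` norm on `ℝ^K`. -/
def l1norm {K : ℕ} (v : Fin K → ℝ) : ℝ := ∑ i, |v i|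

lemma l1norm_nonneg {K : ℕ} (v : Fin K → ℝ) : 0 ≤ l1norm v :=
  Finset.sum_nonneg fun _ _ => abs_nonneg _

lemma l1norm_add_le {K : ℕ} (u v : Fin K → ℝ) : l1norm (u + v) ≤ l1norm u + l1norm v := by
  rw [l1norm, l1norm, l1norm, ← Finset.sum_add_distrib]
  exact Finset.sum_le_sum fun i _ => abs_add_le _ _

lemma l1norm_sub_le {K : ℕ} (u v : Fin K → ℝ) : l1norm (u - v) ≤ l1norm u + l1norm v := by
  rw [l1norm, l1norm, l1norm, ← Finset.sum_add_distrib]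
  exact Finset.sum_le_sum fun i _ => abs_sub _ _

lemma l1norm_smul {K : ℕ} (c : ℝ) (v : Fin K → ℝ) : l1norm (c • v) = |c| * l1norm v := by
  rw [l1norm, l1norm, Finset.mul_sum]
  exact Finset.sum_congr rfl fun i _ => by simp [abs_mul]

lemma l1norm_sum_le {K : ℕ} {ι : Type*} (s : Finset ι) (f : ι → Fin K → ℝ) :
    l1norm (∑ k ∈ s, f k) ≤ ∑ k ∈ s, l1norm (f k) := by
  classical
  induction s using Finset.induction with
  | empty => simp [l1norm]
  | @insert _ _ h ih =>
      rw [Finset.sum_insert h, Finset.sum_insert h]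
      exact le_trans (l1norm_add_le _ _) (by linarith)

lemma tele_sum {M : Type*} [AddCommGroup M] (g : ℕ → M) {n j : ℕ} (hn : 1 ≤ n) (hj : n ≤ j) :
    ∑ k ∈ Finset.Icc n j, (g k - g (k-1)) = g j - g (n-1) := by
  rw [← Finset.Ico_add_one_right_eq_Icc, Finset.sum_Ico_eq_sum_range]
  have h1 : ∀ i, g (n + i) - g (n + i - 1) = g ((n-1) + (i+1)) - g ((n-1) + i) := by
    intro i
    congr 2 <;> omega
  calc ∑ i ∈ Finset.range (j + 1 - n), (g (n + i) - g (n + i - 1))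
      = ∑ i ∈ Finset.range (j + 1 - n), (g ((n-1) + (i+1)) - g ((n-1) + i)) :=
        Finset.sum_congr rfl fun i _ => h1 i
    _ = g ((n-1) + (j + 1 - n)) - g ((n-1) + 0) := Finset.sum_range_sub (fun i => g ((n-1) + i)) _
    _ = g j - g (n-1) := by congr 2 <;> omega

theorem abel_summation_bound
    {K : ℕ} (a : ℕ → ℝ) (ha_pos : ∀ n, 0 < a n) (ha_anti : ∀ n, a (n+1) ≤ a n)
    (γ : ℕ → Fin K → ℝ) (Γ : ℕ → Fin K → ℝ)
    (hΓ : ∀ n, Γ n = ∑ i ∈ Finset.Icc 1 n, γ i) :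
    ∀ n, 1 ≤ n → ∀ j, n ≤ j →
      ENNReal.ofReal (l1norm (∑ k ∈ Finset.Icc n j, a k • γ k)) ≤
        ENNReal.ofReal (l1norm (a j • Γ j)) +
        ENNReal.ofReal (l1norm (a (n-1) • Γ (n-1))) +
        (⨆ k ∈ {k : ℕ | n - 1 ≤ k}, ENNReal.ofReal (l1norm (a k • Γ k))) *
          ENNReal.ofReal (a n / a j) := by
  intro n hn j hj
  have haa : Antitone a := antitone_nat_of_succ_le ha_anti
  have hne : (Finset.Icc (n-1) j).Nonempty := ⟨n-1, by simp [Finset.mem_Icc]; omega⟩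
  set M := (Finset.Icc (n-1) j).sup' hne (fun k => l1norm (a k • Γ k)) with hMdef
  have hM_le : ∀ k ∈ Finset.Icc (n-1) j, l1norm (a k • Γ k) ≤ M :=
    fun k hk => Finset.le_sup' (fun k => l1norm (a k • Γ k)) hk
  have hM_nonneg : 0 ≤ M :=
    le_trans (l1norm_nonneg _) (hM_le (n-1) (by simp [Finset.mem_Icc]; omega))
  -- recurrence for Γ
  have hΓrec : ∀ k, 1 ≤ k → γ k = Γ k - Γ (k-1) := by
    intro k hk
    obtain ⟨m, rfl⟩ := Nat.exists_eq_add_of_le hk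
    simp only [hΓ, Nat.add_sub_cancel_left]
    rw [add_comm 1 m]
    rw [Finset.sum_Icc_succ_top (by omega : 1 ≤ m + 1)]
    abel
  have hγ : ∀ k, 1 ≤ k →
      a k • γ k = (a k • Γ k - a (k-1) • Γ (k-1)) + (a (k-1) - a k) • Γ (k-1) := by
    intro k hk
    rw [hΓrec k hk]
    module
  have split : ∑ k ∈ Finset.Icc n j, a k • γ k
      = (a j • Γ j - a (n-1) • Γ (n-1)) + ∑ k ∈ Finset.Icc n j, (a (k-1) - a k) • Γ (k-1) := by
    rw [← tele_sum (fun k => a k • Γ k) hn hj, ← Finset.sum_add_distrib]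
    exact Finset.sum_congr rfl fun k hk =>
      hγ k (le_trans hn (Finset.mem_Icc.mp hk).1)
  -- termwise bound
  have hterm : ∀ k ∈ Finset.Icc n j,
      l1norm ((a (k-1) - a k) • Γ (k-1)) ≤ M * a n * (1 / a k - 1 / a (k-1)) := by
    intro k hk
    rw [Finset.mem_Icc] at hk
    have hk1 : 1 ≤ k := le_trans hn hk.1
    have hd : a k ≤ a (k-1) := haa (by omega)
    have hank : a k ≤ a n := haa hk.1
    have hpos_k := ha_pos k
    have hpos_k1 := ha_pos (k-1)
    have hc : 0 ≤ l1norm (Γ (k-1)) := l1norm_nonneg _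
    have hMk : a (k-1) * l1norm (Γ (k-1)) ≤ M := by
      have := hM_le (k-1) (by simp [Finset.mem_Icc]; omega)
      rwa [l1norm_smul, abs_of_pos hpos_k1] at this
    rw [l1norm_smul, abs_of_nonneg (by linarith : (0:ℝ) ≤ a (k-1) - a k)]
    have hrw : M * a n * (1 / a k - 1 / a (k-1))
        = (a (k-1) - a k) * ((M / a (k-1)) * (a n / a k)) := by
      field_simp
    rw [hrw]
    apply mul_le_mul_of_nonneg_left _ (by linarith : (0:ℝ) ≤ a (k-1) - a k)
    have h1 : l1norm (Γ (k-1)) ≤ M / a (k-1) := (le_div_iff₀' hpos_k1).mpr hMk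
    have h2 : (1:ℝ) ≤ a n / a k := (one_le_div hpos_k).mpr hank
    calc l1norm (Γ (k-1)) = l1norm (Γ (k-1)) * 1 := (mul_one _).symm
      _ ≤ (M / a (k-1)) * (a n / a k) :=
        mul_le_mul h1 h2 zero_le_one (by positivity)
  -- real-valued key inequality
  have key : l1norm (∑ k ∈ Finset.Icc n j, a k • γ k)
      ≤ l1norm (a j • Γ j) + l1norm (a (n-1) • Γ (n-1)) + M * (a n / a j) := by
    rw [split]
    have h1 := l1norm_add_le (a j • Γ j - a (n-1) • Γ (n-1))
      (∑ k ∈ Finset.Icc n j, (a (k-1) - a k) • Γ (k-1))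
    have h2 := l1norm_sub_le (a j • Γ j) (a (n-1) • Γ (n-1))
    have h3 : l1norm (∑ k ∈ Finset.Icc n j, (a (k-1) - a k) • Γ (k-1))
        ≤ M * (a n / a j) := by
      calc l1norm (∑ k ∈ Finset.Icc n j, (a (k-1) - a k) • Γ (k-1))
          ≤ ∑ k ∈ Finset.Icc n j, l1norm ((a (k-1) - a k) • Γ (k-1)) :=
            l1norm_sum_le _ _
        _ ≤ ∑ k ∈ Finset.Icc n j, M * a n * (1 / a k - 1 / a (k-1)) :=
            Finset.sum_le_sum hterm
        _ = M * a n * (1 / a j - 1 / a (n-1)) := by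
            rw [← Finset.mul_sum, tele_sum (fun k => 1 / a k) hn hj]
        _ ≤ M * a n * (1 / a j) := by
            apply mul_le_mul_of_nonneg_left _ (mul_nonneg hM_nonneg (ha_pos n).le)
            have := ha_pos (n-1)
            have : 0 < 1 / a (n-1) := by positivity
            linarith
        _ = M * (a n / a j) := by
            rw [mul_assoc, mul_one_div]
    linarith
  -- pass to ENNReal
  have hA := l1norm_nonneg (a j • Γ j)
  have hB := l1norm_nonneg (a (n-1) • Γ (n-1))
  have hr : 0 ≤ a n / a j := div_nonneg (ha_pos n).le (ha_pos j).le
  calc ENNReal.ofReal (l1norm (∑ k ∈ Finset.Icc n j, a k • γ k))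
      ≤ ENNReal.ofReal (l1norm (a j • Γ j) + l1norm (a (n-1) • Γ (n-1)) + M * (a n / a j)) :=
        ENNReal.ofReal_le_ofReal key
    _ = ENNReal.ofReal (l1norm (a j • Γ j)) + ENNReal.ofReal (l1norm (a (n-1) • Γ (n-1)))
        + ENNReal.ofReal M * ENNReal.ofReal (a n / a j) := by
        rw [ENNReal.ofReal_add (by linarith) (mul_nonneg hM_nonneg hr),
          ENNReal.ofReal_add hA hB, ENNReal.ofReal_mul hM_nonneg]
    _ ≤ ENNReal.ofReal (l1norm (a j • Γ j)) + ENNReal.ofReal (l1norm (a (n-1) • Γ (n-1)))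
        + (⨆ k ∈ {k : ℕ | n - 1 ≤ k}, ENNReal.ofReal (l1norm (a k • Γ k)))
          * ENNReal.ofReal (a n / a j) := by
        gcongr
        obtain ⟨k₀, hk₀, hMk₀⟩ := Finset.exists_mem_eq_sup' hne (fun k => l1norm (a k • Γ k))
        rw [hMdef, hMk₀]
        exact le_iSup₂_of_le k₀ (Finset.mem_Icc.mp hk₀).1 le_rfl


end
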